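/- If some maximizer p* of conditional entropy over 𝒟 has full-support X-marginal (p*(x) > 0 for all x ∈ 𝒳), then the posterior q(y|x) = p*(x,y)/p*(x) is an optimal minimax-robust decision rule: it achieves max_q loss at most h* = max_{p∈𝒟} H_p(Y|X) against every p ∈ 𝒟. -/

import Mathlib

open scoped BigOperators

variable {𝒳 𝒴 : Type*}

/-- `p` is a probability distribution on `𝒳 × 𝒴`. -/
def IsDist [Fintype 𝒳] [Fintype 𝒴] (p : 𝒳 × 𝒴 → ℝ) : Prop :=
  (∀ a, 0 ≤ p a) ∧ ∑ a, p a = 1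

/-- `q` is a conditional distribution (stochastic matrix) from `𝒳` to `𝒴`. -/
def IsCond [Fintype 𝒴] (q : 𝒳 → 𝒴 → ℝ) : Prop :=
  (∀ x y, 0 ≤ q x y) ∧ ∀ x, ∑ y, q x y = 1

/-- Marginal of `X`. -/
noncomputable def margX [Fintype 𝒴] (p : 𝒳 × 𝒴 → ℝ) (x : 𝒳) : ℝ := ∑ y, p (x, y)

/-- Conditional entropy `H_p(Y|X)` (natural log, `0 log 0 = 0`). -/
noncomputable def condEnt [Fintype 𝒳] [Fintype 𝒴] (p : 𝒳 × 𝒴 → ℝ) : ℝ :=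
  -∑ a, p a * Real.log (p a / margX p a.1)

/-- Expected cross-entropy loss `E_p[-log q(Y|X)]`, valued in `EReal` with value `⊤`
when `q(y|x) = 0` while `p(x,y) > 0`. -/
noncomputable def CEE [Fintype 𝒳] [Fintype 𝒴] (p : 𝒳 × 𝒴 → ℝ) (q : 𝒳 → 𝒴 → ℝ) : EReal :=
  ∑ a, if q a.1 a.2 = 0 ∧ 0 < p a then (⊤ : EReal)
       else ((p a * (-Real.log (q a.1 a.2)) : ℝ) : EReal)

section AuxRobust

lemma EReal.coe_finset_sum' {ι : Type*} (s : Finset ι) (f : ι → ℝ) :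
    ((∑ i ∈ s, f i : ℝ) : EReal) = ∑ i ∈ s, ((f i : ℝ) : EReal) := by
  classical
  induction s using Finset.induction with
  | empty => simp
  | insert _ _ h ih => simp [Finset.sum_insert h, ih]

variable [Fintype 𝒳] [Fintype 𝒴]

lemma margX_nonneg' {p : 𝒳 × 𝒴 → ℝ} (hp : ∀ a, 0 ≤ p a) (x : 𝒳) : 0 ≤ margX p x :=
  Finset.sum_nonneg fun y _ => hp (x, y)

lemma margX_comb' (s p : 𝒳 × 𝒴 → ℝ) (t : ℝ) (x : 𝒳) :
    margX (fun a => (1 - t) * s a + t * p a) x = (1 - t) * margX s x + t * margX p x := by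
  simp [margX, Finset.sum_add_distrib, Finset.mul_sum]

lemma p_le_margX' {p : 𝒳 × 𝒴 → ℝ} (hp : ∀ a, 0 ≤ p a) (a : 𝒳 × 𝒴) : p a ≤ margX p a.1 := by
  have : p (a.1, a.2) ≤ ∑ y, p (a.1, y) :=
    Finset.single_le_sum (fun y _ => hp (a.1, y)) (Finset.mem_univ a.2)
  simpa [margX] using this

lemma sum_margX' (p : 𝒳 × 𝒴 → ℝ) : ∑ x, margX p x = ∑ a, p a := by
  rw [Fintype.sum_prod_type]; rfl

lemma condEnt_eq' (p : 𝒳 × 𝒴 → ℝ) :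
    condEnt p = ∑ a, p a * (-Real.log (p a / margX p a.1)) := by
  simp [condEnt, mul_neg, Finset.sum_neg_distrib]

/-- Gibbs' inequality. -/
lemma gibbs' (s : 𝒳 × 𝒴 → ℝ) (hs0 : ∀ a, 0 ≤ s a) (hs1 : ∑ a, s a = 1)
    (hsx : ∀ x, 0 < margX s x)
    (r : 𝒳 × 𝒴 → ℝ) (hr0 : ∀ a, 0 ≤ r a) (hr1 : ∀ x, ∑ y, r (x, y) = 1)
    (hpos : ∀ a, 0 < s a → 0 < r a) :
    ∑ a, s a * (-Real.log (s a / margX s a.1)) ≤ ∑ a, s a * (-Real.log (r a)) := by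
  have key : ∀ a : 𝒳 × 𝒴,
      s a * Real.log (r a) ≤ s a * Real.log (s a / margX s a.1) + (r a * margX s a.1 - s a) := by
    intro a
    rcases eq_or_lt_of_le (hs0 a) with h0 | h0
    · have : (0:ℝ) ≤ r a * margX s a.1 := mul_nonneg (hr0 a) (margX_nonneg' hs0 a.1)
      simp [← h0]; linarith
    · have hra := hpos a h0
      have hmx := hsx a.1
      have hq : (0:ℝ) < s a / margX s a.1 := div_pos h0 hmx
      have h1 : Real.log (r a) - Real.log (s a / margX s a.1)
          = Real.log (r a * margX s a.1 / s a) := by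
        rw [Real.log_div (by positivity) (ne_of_gt h0), Real.log_mul (ne_of_gt hra) (ne_of_gt hmx),
          Real.log_div (ne_of_gt h0) (ne_of_gt hmx)]
        ring
      have h2 : Real.log (r a * margX s a.1 / s a) ≤ r a * margX s a.1 / s a - 1 :=
        Real.log_le_sub_one_of_pos (by positivity)
      have h3 : s a * (r a * margX s a.1 / s a - 1) = r a * margX s a.1 - s a := by
        field_simp
      nlinarith [mul_le_mul_of_nonneg_left h2 (le_of_lt h0)]
  have hsum : ∑ a, (r a * margX s a.1 - s a) = 0 := by
    rw [Finset.sum_sub_distrib, hs1]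
    have : ∑ a : 𝒳 × 𝒴, r a * margX s a.1 = 1 := by
      rw [Fintype.sum_prod_type]
      have h5 : ∀ x : 𝒳, ∑ y, r (x, y) * margX s x = margX s x := by
        intro x; rw [← Finset.sum_mul, hr1 x, one_mul]
      rw [Finset.sum_congr rfl fun x _ => h5 x]
      rw [sum_margX' s, hs1]
    rw [this]; ring
  have h4 : ∑ a, s a * Real.log (r a)
      ≤ ∑ a, (s a * Real.log (s a / margX s a.1) + (r a * margX s a.1 - s a)) :=
    Finset.sum_le_sum fun a _ => key a
  rw [Finset.sum_add_distrib, hsum, add_zero] at h4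
  simp only [mul_neg, Finset.sum_neg_distrib]
  linarith

/-- The key inequality for a fixed mixing parameter `t`. -/
lemma key_t' (𝒟 : Set (𝒳 × 𝒴 → ℝ)) (h𝒟 : ∀ p ∈ 𝒟, IsDist p)
    (hconv : Convex ℝ 𝒟)
    (pstar : 𝒳 × 𝒴 → ℝ) (hmem : pstar ∈ 𝒟)
    (hmax : ∀ p ∈ 𝒟, condEnt p ≤ condEnt pstar)
    (hsupp : ∀ x, 0 < margX pstar x)
    (p : 𝒳 × 𝒴 → ℝ) (hp : p ∈ 𝒟) (t : ℝ) (ht0 : 0 < t) (ht1 : t < 1) :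
    ∑ a, p a * (-Real.log ((((1-t) * pstar a + t * p a)) /
        margX (fun b => (1-t) * pstar b + t * p b) a.1)) ≤ condEnt pstar := by
  set pt : 𝒳 × 𝒴 → ℝ := fun b => (1 - t) * pstar b + t * p b with hpt_def
  have hpt_mem : pt ∈ 𝒟 := by
    have h := hconv hmem hp (by linarith : (0:ℝ) ≤ 1 - t) (le_of_lt ht0) (by ring)
    have heq : (1 - t) • pstar + t • p = pt := by
      funext b; simp [hpt_def, Pi.add_apply, Pi.smul_apply, smul_eq_mul]
    rwa [heq] at h
  obtain ⟨hs0, hs1⟩ := h𝒟 pstar hmem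
  obtain ⟨hp0, hp1⟩ := h𝒟 p hp
  have hmpt : ∀ x, 0 < margX pt x := by
    intro x
    rw [hpt_def, margX_comb']
    have h1 : 0 < (1 - t) * margX pstar x := by
      have := hsupp x; nlinarith
    have h2 : 0 ≤ t * margX p x := mul_nonneg (le_of_lt ht0) (margX_nonneg' hp0 x)
    linarith
  set qt : 𝒳 × 𝒴 → ℝ := fun b => pt b / margX pt b.1 with hqt_def
  have hdecomp : condEnt pt
      = (1 - t) * ∑ a, pstar a * (-Real.log (qt a)) + t * ∑ a, p a * (-Real.log (qt a)) := by
    rw [condEnt_eq', Finset.mul_sum, Finset.mul_sum, ← Finset.sum_add_distrib]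
    refine Finset.sum_congr rfl fun a _ => ?_
    show pt a * _ = _
    rw [hpt_def]
    ring
  have hgibbs : condEnt pstar ≤ ∑ a, pstar a * (-Real.log (qt a)) := by
    rw [condEnt_eq']
    refine gibbs' pstar hs0 hs1 hsupp qt ?_ ?_ ?_
    · intro a
      exact div_nonneg (by
        have h1 : 0 ≤ (1-t) * pstar a := by nlinarith [hs0 a]
        have h2 : 0 ≤ t * p a := mul_nonneg (le_of_lt ht0) (hp0 a)
        show 0 ≤ (1-t) * pstar a + t * p a
        linarith) (le_of_lt (hmpt a.1))
    · intro x
      have : ∑ y, qt (x, y) = (∑ y, pt (x, y)) / margX pt x := by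
        simp [hqt_def, Finset.sum_div]
      rw [this]
      exact div_self (ne_of_gt (hmpt x))
    · intro a ha
      refine div_pos ?_ (hmpt a.1)
      show 0 < (1-t) * pstar a + t * p a
      have h2 : 0 ≤ t * p a := mul_nonneg (le_of_lt ht0) (hp0 a)
      nlinarith
  have hub := hmax pt hpt_mem
  rw [hdecomp] at hub
  set A := ∑ a, pstar a * (-Real.log (qt a))
  set B := ∑ a, p a * (-Real.log (qt a)) with hB
  have : B ≤ condEnt pstar := by nlinarith
  exact this

/-- If the loss bound holds for every mixture, then the support of `p` is contained in
the support of `pstar`. -/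
lemma support_lemma' (pstar : 𝒳 × 𝒴 → ℝ) (hs0 : ∀ a, 0 ≤ pstar a)
    (hsupp : ∀ x, 0 < margX pstar x) (H : ℝ)
    (p : 𝒳 × 𝒴 → ℝ) (hp0 : ∀ a, 0 ≤ p a)
    (hkey : ∀ t : ℝ, 0 < t → t < 1 →
      ∑ a, p a * (-Real.log ((((1-t) * pstar a + t * p a)) /
        margX (fun b => (1-t) * pstar b + t * p b) a.1)) ≤ H) :
    ∀ a, 0 < p a → 0 < pstar a := by
  intro a hpa
  by_contra hns
  have hsa : pstar a = 0 := le_antisymm (not_lt.mp hns) (hs0 a)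
  set c : ℝ := Real.log (margX pstar a.1) - Real.log 2 - Real.log (p a) with hc
  set t : ℝ := min (1/2) (Real.exp (c - H / p a - 1)) with htdef
  have ht0 : 0 < t := lt_min (by norm_num) (Real.exp_pos _)
  have ht2 : t ≤ 1/2 := min_le_left _ _
  have ht1 : t < 1 := lt_of_le_of_lt ht2 (by norm_num)
  have hlogt : Real.log t ≤ c - H / p a - 1 := by
    calc Real.log t ≤ Real.log (Real.exp (c - H / p a - 1)) :=
          Real.log_le_log ht0 (min_le_right _ _)
      _ = c - H / p a - 1 := Real.log_exp _
  set pt : 𝒳 × 𝒴 → ℝ := fun b => (1 - t) * pstar b + t * p b with hptdef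
  have hpt0 : ∀ b, 0 ≤ pt b := by
    intro b
    have h1 : 0 ≤ (1 - t) * pstar b := mul_nonneg (by linarith) (hs0 b)
    have h2 : 0 ≤ t * p b := mul_nonneg (le_of_lt ht0) (hp0 b)
    simpa [hptdef] using add_nonneg h1 h2
  have hmpt : ∀ x, 0 < margX pt x := by
    intro x
    rw [hptdef, margX_comb']
    have h1 : 0 < (1 - t) * margX pstar x := mul_pos (by linarith) (hsupp x)
    have h2 : 0 ≤ t * margX p x := mul_nonneg (le_of_lt ht0) (margX_nonneg' hp0 x)
    linarith
  have hterm_nonneg : ∀ b : 𝒳 × 𝒴, 0 ≤ p b * (-Real.log (pt b / margX pt b.1)) := by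
    intro b
    refine mul_nonneg (hp0 b) (neg_nonneg.mpr (Real.log_nonpos ?_ ?_))
    · exact div_nonneg (hpt0 b) (le_of_lt (hmpt b.1))
    · exact (div_le_one (hmpt b.1)).mpr (p_le_margX' hpt0 b)
  have hsingle : p a * (-Real.log (pt a / margX pt a.1)) ≤ H := by
    have h1 : p a * (-Real.log (pt a / margX pt a.1))
        ≤ ∑ b, p b * (-Real.log (pt b / margX pt b.1)) :=
      Finset.single_le_sum (fun b _ => hterm_nonneg b) (Finset.mem_univ a)
    exact h1.trans (hkey t ht0 ht1)
  have hpta : pt a = t * p a := by simp [hptdef, hsa]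
  have hpta_pos : 0 < pt a := by rw [hpta]; positivity
  have hlog1 : -Real.log (pt a / margX pt a.1)
      = Real.log (margX pt a.1) - Real.log t - Real.log (p a) := by
    rw [Real.log_div (ne_of_gt hpta_pos) (ne_of_gt (hmpt a.1)), hpta,
      Real.log_mul (ne_of_gt ht0) (ne_of_gt hpa)]
    ring
  have hlogm : Real.log (margX pstar a.1) - Real.log 2 ≤ Real.log (margX pt a.1) := by
    have h1 : (1/2 : ℝ) * margX pstar a.1 ≤ margX pt a.1 := by
      rw [hptdef, margX_comb']
      have h2 : 0 ≤ t * margX p a.1 := mul_nonneg (le_of_lt ht0) (margX_nonneg' hp0 a.1)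
      nlinarith [hsupp a.1]
    have h3 : Real.log ((1/2 : ℝ) * margX pstar a.1) ≤ Real.log (margX pt a.1) :=
      Real.log_le_log (mul_pos (by norm_num) (hsupp a.1)) h1
    rw [Real.log_mul (by norm_num) (ne_of_gt (hsupp a.1))] at h3
    have : Real.log (1/2 : ℝ) = -Real.log 2 := by
      rw [one_div, Real.log_inv]
    linarith
  have hge : H / p a + 1 ≤ -Real.log (pt a / margX pt a.1) := by
    rw [hlog1]; linarith
  have hfinal : H + p a ≤ p a * (-Real.log (pt a / margX pt a.1)) := by
    have h1 : p a * (H / p a + 1) ≤ p a * (-Real.log (pt a / margX pt a.1)) :=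
      mul_le_mul_of_nonneg_left hge (le_of_lt hpa)
    have h2 : p a * (H / p a + 1) = H + p a := by
      field_simp
    linarith
  linarith

end AuxRobust

/-- if a maximizer `p*` of conditional entropy over `𝒟` has full-support
`X`-marginal, then the posterior `q(y|x) = p*(x,y)/p*(x)` is an optimal minimax-robust
decision rule: it is a valid conditional distribution achieving loss at most
`h* = max_{p∈𝒟} H_p(Y|X) = H_{p*}(Y|X)` against every `p ∈ 𝒟`. -/
theorem full_support_maximizer_posterior_is_robust [Fintype 𝒳] [Fintype 𝒴]
    (𝒟 : Set (𝒳 × 𝒴 → ℝ)) (h𝒟 : ∀ p ∈ 𝒟, IsDist p)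
    (hclosed : IsClosed 𝒟) (hconv : Convex ℝ 𝒟)
    (pstar : 𝒳 × 𝒴 → ℝ) (hmem : pstar ∈ 𝒟)
    (hmax : ∀ p ∈ 𝒟, condEnt p ≤ condEnt pstar)
    (hsupp : ∀ x, 0 < margX pstar x) :
    IsCond (fun x y => pstar (x, y) / margX pstar x) ∧
    ∀ p ∈ 𝒟, CEE p (fun x y => pstar (x, y) / margX pstar x)
      ≤ ((condEnt pstar : ℝ) : EReal) := by
  obtain ⟨hs0, hs1⟩ := h𝒟 pstar hmem
  constructor
  · constructor
    · intro x y
      exact div_nonneg (hs0 (x, y)) (le_of_lt (hsupp x))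
    · intro x
      rw [← Finset.sum_div]
      exact div_self (ne_of_gt (hsupp x))
  · intro p hp
    obtain ⟨hp0, hp1⟩ := h𝒟 p hp
    have hkey : ∀ t : ℝ, 0 < t → t < 1 →
        ∑ a, p a * (-Real.log ((((1-t) * pstar a + t * p a)) /
          margX (fun b => (1-t) * pstar b + t * p b) a.1)) ≤ condEnt pstar :=
      fun t ht0 ht1 => key_t' 𝒟 h𝒟 hconv pstar hmem hmax hsupp p hp t ht0 ht1
    have hsuppP : ∀ a, 0 < p a → 0 < pstar a :=
      support_lemma' pstar hs0 hsupp (condEnt pstar) p hp0 hkey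
    -- the real-valued loss bound via a limit t → 0⁺
    have hreal : ∑ a, p a * (-Real.log (pstar a / margX pstar a.1)) ≤ condEnt pstar := by
      set t : ℕ → ℝ := fun n => 1 / ((n : ℝ) + 2) with htdef
      have ht_lim : Filter.Tendsto t Filter.atTop (nhds 0) := by
        have h := (tendsto_one_div_add_atTop_nhds_zero_nat :
            Filter.Tendsto (fun n : ℕ => 1 / ((n : ℝ) + 1)) Filter.atTop (nhds 0)).comp
          (Filter.tendsto_add_atTop_nat 1)
        have heq : t = fun n : ℕ => 1 / ((((n + 1) : ℕ) : ℝ) + 1) := by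
          funext n; rw [htdef]; push_cast; ring_nf
        rwa [heq]
      have ht0 : ∀ n, 0 < t n := by
        intro n; rw [htdef]; positivity
      have ht1 : ∀ n, t n < 1 := by
        intro n
        rw [htdef, div_lt_one (by positivity)]
        have : (0:ℝ) ≤ (n : ℝ) := Nat.cast_nonneg n
        linarith
      have hb : ∀ n : ℕ, ∑ a, p a * (-Real.log ((((1 - t n) * pstar a + t n * p a)) /
          margX (fun b => (1 - t n) * pstar b + t n * p b) a.1)) ≤ condEnt pstar :=
        fun n => hkey (t n) (ht0 n) (ht1 n)
      refine le_of_tendsto' (x := Filter.atTop) ?_ hb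
      refine tendsto_finset_sum _ fun a _ => ?_
      rcases eq_or_lt_of_le (hp0 a) with hpa | hpa
      · simp only [← hpa, zero_mul]
        exact tendsto_const_nhds
      · have hsa := hsuppP a hpa
        have hnum : Filter.Tendsto (fun n => (1 - t n) * pstar a + t n * p a)
            Filter.atTop (nhds (pstar a)) := by
          have h : Filter.Tendsto (fun n => ((1:ℝ) - t n) * pstar a + t n * p a)
              Filter.atTop (nhds (((1:ℝ) - 0) * pstar a + 0 * p a)) :=
            ((tendsto_const_nhds.sub ht_lim).mul
              tendsto_const_nhds).add (ht_lim.mul tendsto_const_nhds)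
          simpa using h
        have hden : Filter.Tendsto
            (fun n => margX (fun b => (1 - t n) * pstar b + t n * p b) a.1)
            Filter.atTop (nhds (margX pstar a.1)) := by
          have h : Filter.Tendsto (fun n => ((1:ℝ) - t n) * margX pstar a.1 + t n * margX p a.1)
              Filter.atTop (nhds (((1:ℝ) - 0) * margX pstar a.1 + 0 * margX p a.1)) :=
            ((tendsto_const_nhds.sub ht_lim).mul
              tendsto_const_nhds).add (ht_lim.mul tendsto_const_nhds)
          simp only [margX_comb']
          simpa using h
        have hq : Filter.Tendsto
            (fun n => ((1 - t n) * pstar a + t n * p a) /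
              margX (fun b => (1 - t n) * pstar b + t n * p b) a.1)
            Filter.atTop (nhds (pstar a / margX pstar a.1)) :=
          hnum.div hden (ne_of_gt (hsupp a.1))
        have hqne : pstar a / margX pstar a.1 ≠ 0 :=
          ne_of_gt (div_pos hsa (hsupp a.1))
        exact ((hq.log hqne).neg).const_mul (p a)
    -- transfer to EReal
    have hq_pos : ∀ a : 𝒳 × 𝒴, 0 < p a → 0 < pstar a / margX pstar a.1 :=
      fun a h => div_pos (hsuppP a h) (hsupp a.1)
    have hCEE : CEE p (fun x y => pstar (x, y) / margX pstar x)
        = ((∑ a, p a * (-Real.log (pstar a / margX pstar a.1)) : ℝ) : EReal) := by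
      rw [CEE, EReal.coe_finset_sum']
      refine Finset.sum_congr rfl fun a _ => ?_
      rw [if_neg (by
        rintro ⟨h0, hpa⟩
        simp only [Prod.mk.eta] at h0
        exact absurd h0 (ne_of_gt (hq_pos a hpa)))]
    rw [hCEE]
    exact EReal.coe_le_coe_iff.mpr hreal
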